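/- (Simultaneous cycling bound) Let G be a Garside group, p ∈ ℤ, and P, X ∈ G⁺. Let s := P ∧ Δ be the greatest common left divisor of P and Δ. If Δ^{p+1} ≼ X Δ^p P X⁻¹, then X ≽ τ^{−p}(Δ s⁻¹). -/

import Mathlib

/-- A Garside structure on a group `G`: a submonoid `G⁺` of positive elements
together with a Garside element `Δ`, satisfying the Garside axioms. -/
structure GarsideStructure (G : Type*) [Group G] where
  /-- the monoid `G⁺` of positive elements -/
  pos : Submonoid G
  /-- the Garside element `Δ` -/
  Δ : G
  delta_mem : Δ ∈ pos
  /-- `G⁺` is Noetherian -/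
  noetherian : ∀ a ∈ pos, ∃ n : ℕ, ∀ l : List G,
    (∀ x ∈ l, x ∈ pos ∧ x ≠ 1) → l.prod = a → l.length ≤ n
  /-- any two elements of `G⁺` admit a least common right multiple (w.r.t. `≼`) -/
  lcm_right : ∀ a ∈ pos, ∀ b ∈ pos, ∃ m ∈ pos,
    a⁻¹ * m ∈ pos ∧ b⁻¹ * m ∈ pos ∧
      ∀ c ∈ pos, a⁻¹ * c ∈ pos → b⁻¹ * c ∈ pos → m⁻¹ * c ∈ pos
  /-- any two elements of `G⁺` admit a least common left multiple (w.r.t. `≽`) -/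
  lcm_left : ∀ a ∈ pos, ∀ b ∈ pos, ∃ m ∈ pos,
    m * a⁻¹ ∈ pos ∧ m * b⁻¹ ∈ pos ∧
      ∀ c ∈ pos, c * a⁻¹ ∈ pos → c * b⁻¹ ∈ pos → c * m⁻¹ ∈ pos
  /-- `G` is the group of fractions of `G⁺` -/
  fractions : ∀ g : G, ∃ a ∈ pos, ∃ b ∈ pos, g = a⁻¹ * b
  /-- `Δ` is balanced: its left divisors in `G⁺` coincide with its right divisors -/
  balanced : ∀ s ∈ pos, (s⁻¹ * Δ ∈ pos ↔ Δ * s⁻¹ ∈ pos)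
  /-- the set of simple elements (divisors of `Δ`) is finite -/
  simples_finite : {s : G | s ∈ pos ∧ s⁻¹ * Δ ∈ pos}.Finite
  /-- the simple elements generate `G⁺` -/
  simples_generate : Submonoid.closure {s : G | s ∈ pos ∧ s⁻¹ * Δ ∈ pos} = pos

namespace GarsideStructure

variable {G : Type*} [Group G]

/-- `a ≼ b` : left divisibility. -/
def LeftDvd (Γ : GarsideStructure G) (a b : G) : Prop := a⁻¹ * b ∈ Γ.pos

/-- `b ≽ a` : right divisibility. -/
def RightDvd (Γ : GarsideStructure G) (b a : G) : Prop := b * a⁻¹ ∈ Γ.pos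

/-- a simple element: a divisor of `Δ`. -/
def Simple (Γ : GarsideStructure G) (s : G) : Prop := s ∈ Γ.pos ∧ Γ.LeftDvd s Γ.Δ

/-- an atom of `G⁺`. -/
def Atom (Γ : GarsideStructure G) (a : G) : Prop :=
  a ∈ Γ.pos ∧ a ≠ 1 ∧ ∀ b ∈ Γ.pos, ∀ c ∈ Γ.pos, a = b * c → b = 1 ∨ c = 1

/-- the iterated automorphism `τ^k`, where `τ(x) = Δ⁻¹xΔ`; so `τ^k(x) = Δ^(-k) x Δ^k`. -/
def tau (Γ : GarsideStructure G) (k : ℤ) (x : G) : G := Γ.Δ ^ (-k) * x * Γ.Δ ^ k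

/-- `d` is the greatest common left divisor (`∧`) of `a` and `b`. -/
def IsLeftGcd (Γ : GarsideStructure G) (d a b : G) : Prop :=
  d ∈ Γ.pos ∧ Γ.LeftDvd d a ∧ Γ.LeftDvd d b ∧
    ∀ c ∈ Γ.pos, Γ.LeftDvd c a → Γ.LeftDvd c b → Γ.LeftDvd c d

/-- `d` is the greatest common right divisor (`⋀̃`) of `a` and `b`. -/
def IsRightGcd (Γ : GarsideStructure G) (d a b : G) : Prop :=
  d ∈ Γ.pos ∧ Γ.RightDvd a d ∧ Γ.RightDvd b d ∧
    ∀ c ∈ Γ.pos, Γ.RightDvd a c → Γ.RightDvd b c → Γ.RightDvd d c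

/-- membership of a tuple `a ∈ Gʳ` in the interval `[p,q]`:
`pᵢ ≤ inf aᵢ` (i.e. `Δ^pᵢ ≼ aᵢ`) and `sup aᵢ ≤ qᵢ` (i.e. `aᵢ ≼ Δ^qᵢ`) for all `i`. -/
def InInterval (Γ : GarsideStructure G) {r : ℕ} (p q : Fin r → ℤ) (a : Fin r → G) : Prop :=
  ∀ i, Γ.LeftDvd (Γ.Δ ^ (p i)) (a i) ∧ Γ.LeftDvd (a i) (Γ.Δ ^ (q i))

/-- `‖a‖`: the maximal number of atoms in an expression of `a` as a product of atoms. -/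
noncomputable def anorm (Γ : GarsideStructure G) (a : G) : ℕ :=
  sSup {n | ∃ l : List G, (∀ x ∈ l, Γ.Atom x) ∧ l.prod = a ∧ l.length = n}

end GarsideStructure

namespace GarsideStructure

variable {G : Type*} [Group G] (Γ : GarsideStructure G)

/-- Conjugation by `Δ⁻¹` preserves positivity. -/
lemma conj_inv_mem {a : G} (ha : a ∈ Γ.pos) : Γ.Δ⁻¹ * a * Γ.Δ ∈ Γ.pos := by
  rw [← Γ.simples_generate] at ha
  induction ha using Submonoid.closure_induction with
  | mem s hs =>
      obtain ⟨hs1, hs2⟩ := hs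
      have ht : s⁻¹ * Γ.Δ ∈ Γ.pos := hs2
      have ht2 : (s⁻¹ * Γ.Δ) * (s⁻¹ * Γ.Δ)⁻¹ * s ∈ Γ.pos := by
        have : (s⁻¹ * Γ.Δ) * (s⁻¹ * Γ.Δ)⁻¹ * s = s := by group
        rw [this]; exact hs1
      have hDt : Γ.Δ * (s⁻¹ * Γ.Δ)⁻¹ ∈ Γ.pos := by
        have : Γ.Δ * (s⁻¹ * Γ.Δ)⁻¹ = s := by group
        rw [this]; exact hs1
      have hbal := (Γ.balanced _ ht).mpr hDt
      have heq : Γ.Δ⁻¹ * s * Γ.Δ = (s⁻¹ * Γ.Δ)⁻¹ * Γ.Δ := by group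
      rw [heq]; exact hbal
  | one => simpa using Γ.pos.one_mem
  | mul a b _ _ iha ihb =>
      have heq : Γ.Δ⁻¹ * (a * b) * Γ.Δ = (Γ.Δ⁻¹ * a * Γ.Δ) * (Γ.Δ⁻¹ * b * Γ.Δ) := by
        group
      rw [heq]; exact Γ.pos.mul_mem iha ihb

/-- Conjugation by `Δ` preserves positivity. -/
lemma conj_mem {a : G} (ha : a ∈ Γ.pos) : Γ.Δ * a * Γ.Δ⁻¹ ∈ Γ.pos := by
  rw [← Γ.simples_generate] at ha
  induction ha using Submonoid.closure_induction with
  | mem s hs =>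
      obtain ⟨hs1, hs2⟩ := hs
      have hu : Γ.Δ * s⁻¹ ∈ Γ.pos := (Γ.balanced s hs1).mp hs2
      have hu2 : (Γ.Δ * s⁻¹)⁻¹ * Γ.Δ ∈ Γ.pos := by
        have : (Γ.Δ * s⁻¹)⁻¹ * Γ.Δ = s := by group
        rw [this]; exact hs1
      have hbal := (Γ.balanced _ hu).mp hu2
      have heq : Γ.Δ * s * Γ.Δ⁻¹ = Γ.Δ * (Γ.Δ * s⁻¹)⁻¹ := by group
      rw [heq]; exact hbal
  | one => simpa using Γ.pos.one_mem
  | mul a b _ _ iha ihb =>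
      have heq : Γ.Δ * (a * b) * Γ.Δ⁻¹ = (Γ.Δ * a * Γ.Δ⁻¹) * (Γ.Δ * b * Γ.Δ⁻¹) := by
        group
      rw [heq]; exact Γ.pos.mul_mem iha ihb

/-- Conjugation by any power of `Δ` preserves positivity. -/
lemma zconj_mem (k : ℤ) {a : G} (ha : a ∈ Γ.pos) :
    Γ.Δ ^ k * a * Γ.Δ ^ (-k) ∈ Γ.pos := by
  induction k using Int.induction_on with
  | zero => simpa using ha
  | succ n ih =>
      have := Γ.conj_mem ih
      have heq : Γ.Δ ^ ((n : ℤ) + 1) * a * Γ.Δ ^ (-((n : ℤ) + 1)) =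
          Γ.Δ * (Γ.Δ ^ (n : ℤ) * a * Γ.Δ ^ (-(n : ℤ))) * Γ.Δ⁻¹ := by group
      rw [heq]; exact this
  | pred n ih =>
      have := Γ.conj_inv_mem ih
      have heq : Γ.Δ ^ (-(n : ℤ) - 1) * a * Γ.Δ ^ (-(-(n : ℤ) - 1)) =
          Γ.Δ⁻¹ * (Γ.Δ ^ (-(n : ℤ)) * a * Γ.Δ ^ (-(-(n : ℤ)))) * Γ.Δ := by group
      rw [heq]; exact this

end GarsideStructure

/-- Simultaneous cycling bound: for `p ∈ ℤ` and `P, X ∈ G⁺`, with `s := P ∧ Δ`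
the greatest common left divisor of `P` and `Δ`: if `Δ^(p+1) ≼ X Δ^p P X⁻¹`,
then `X ≽ τ^(−p)(Δ s⁻¹)`. -/
theorem simultaneous_cycling_bound {G : Type*} [Group G] (Γ : GarsideStructure G)
    (p : ℤ) (P X : G) (hP : P ∈ Γ.pos) (hX : X ∈ Γ.pos)
    (s : G) (hs : Γ.IsLeftGcd s P Γ.Δ)
    (h : Γ.LeftDvd (Γ.Δ ^ (p + 1)) (X * Γ.Δ ^ p * P * X⁻¹)) :
    Γ.RightDvd X (Γ.tau (-p) (Γ.Δ * s⁻¹)) := by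
  -- Let `Y := τ^p(X) = Δ^(-p) X Δ^p`, a positive element.
  set Y : G := Γ.Δ ^ (-p) * X * Γ.Δ ^ p with hYdef
  have hY : Y ∈ Γ.pos := by
    have := Γ.zconj_mem (-p) hX
    rwa [neg_neg] at this
  -- From the hypothesis, `Δ ≼ Y * P`.
  have hu : (Γ.Δ ^ (p + 1))⁻¹ * (X * Γ.Δ ^ p * P * X⁻¹) * X ∈ Γ.pos :=
    Γ.pos.mul_mem h hX
  have hYP : Γ.Δ⁻¹ * (Y * P) ∈ Γ.pos := by
    have heq : Γ.Δ⁻¹ * (Y * P) =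
        (Γ.Δ ^ (p + 1))⁻¹ * (X * Γ.Δ ^ p * P * X⁻¹) * X := by
      rw [hYdef]; group
    rw [heq]; exact hu
  -- Also `Δ ≼ Y * Δ`.
  have hYΔ : Γ.Δ⁻¹ * (Y * Γ.Δ) ∈ Γ.pos := by
    have := Γ.conj_inv_mem hY
    have heq : Γ.Δ⁻¹ * (Y * Γ.Δ) = Γ.Δ⁻¹ * Y * Γ.Δ := by group
    rw [heq]; exact this
  -- Take the right lcm `m` of `Δ` and `Y`; write `m = Y * e`.
  obtain ⟨m, hm, hΔm, hYm, hmin⟩ :=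
    Γ.lcm_right Γ.Δ Γ.delta_mem Y hY
  set e : G := Y⁻¹ * m with hedef
  have he : e ∈ Γ.pos := hYm
  -- `m ≼ Y * P` and `m ≼ Y * Δ`, hence `e ≼ P` and `e ≼ Δ`.
  have hmYP : m⁻¹ * (Y * P) ∈ Γ.pos := by
    refine hmin (Y * P) (Γ.pos.mul_mem hY hP) hYP ?_
    have : Y⁻¹ * (Y * P) = P := by group
    rw [this]; exact hP
  have hmYΔ : m⁻¹ * (Y * Γ.Δ) ∈ Γ.pos := by
    refine hmin (Y * Γ.Δ) (Γ.pos.mul_mem hY Γ.delta_mem) hYΔ ?_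
    have : Y⁻¹ * (Y * Γ.Δ) = Γ.Δ := by group
    rw [this]; exact Γ.delta_mem
  have heP : Γ.LeftDvd e P := by
    show e⁻¹ * P ∈ Γ.pos
    have : e⁻¹ * P = m⁻¹ * (Y * P) := by rw [hedef]; group
    rw [this]; exact hmYP
  have heΔ : Γ.LeftDvd e Γ.Δ := by
    show e⁻¹ * Γ.Δ ∈ Γ.pos
    have : e⁻¹ * Γ.Δ = m⁻¹ * (Y * Γ.Δ) := by rw [hedef]; group
    rw [this]; exact hmYΔ
  -- Since `s = P ∧ Δ`, we get `e ≼ s`, hence `Δ ≼ m ≼ Y * s`.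
  have hes : e⁻¹ * s ∈ Γ.pos := hs.2.2.2 e he heP heΔ
  have hΔYs : Γ.Δ⁻¹ * (Y * s) ∈ Γ.pos := by
    have heq : Γ.Δ⁻¹ * (Y * s) = (Γ.Δ⁻¹ * m) * (e⁻¹ * s) := by
      rw [hedef]; group
    rw [heq]; exact Γ.pos.mul_mem hΔm hes
  -- Transfer to right divisibility and conjugate back by `Δ^p`.
  have hYs : Y * s * Γ.Δ⁻¹ ∈ Γ.pos := by
    have := Γ.conj_mem hΔYs
    have heq : Y * s * Γ.Δ⁻¹ = Γ.Δ * (Γ.Δ⁻¹ * (Y * s)) * Γ.Δ⁻¹ := by group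
    rw [heq]; exact this
  show X * (Γ.tau (-p) (Γ.Δ * s⁻¹))⁻¹ ∈ Γ.pos
  have := Γ.zconj_mem p hYs
  have heq : X * (Γ.tau (-p) (Γ.Δ * s⁻¹))⁻¹ =
      Γ.Δ ^ p * (Y * s * Γ.Δ⁻¹) * Γ.Δ ^ (-p) := by
    rw [hYdef]; unfold GarsideStructure.tau; group
  rw [heq]; exact this
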